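/- The Jacobi triple product identity: for complex q with |q| < 1 and z ≠ 0, Σ_{n∈ℤ} q^{n²/2} z^n = (q;q)_∞ · ∏_{i ∈ ℕ + 1/2} (1 + q^i z)(1 + q^i/z), where (q;q)_∞ = ∏_{k≥1} (1 − q^k) and the product over i runs over positive half-integers 1/2, 3/2, 5/2, …. -/

import Mathlib

open Filter Topology Finset

namespace JTP

lemma summable_log {F : ℕ → ℂ} (hF : Summable fun i => ‖F i - 1‖) :
    Summable fun i => Complex.log (F i) := by
  have h1 : Tendsto (fun i => ‖F i - 1‖) atTop (𝓝 0) := hF.tendsto_atTop_zero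
  have h2 : ∀ᶠ i in atTop, ‖F i - 1‖ ≤ 1/2 :=
    h1.eventually_le_const (by norm_num)
  refine Summable.of_norm_bounded_eventually (g := fun i => 3/2 * ‖F i - 1‖) (hF.mul_left _) ?_
  rw [Nat.cofinite_eq_atTop]
  filter_upwards [h2] with i hi
  have : F i = 1 + (F i - 1) := by ring
  rw [this]
  simpa using Complex.norm_log_one_add_half_le_self hi

lemma multipliable_of_summable {F : ℕ → ℂ} (hF : Summable fun i => ‖F i - 1‖) :
    Multipliable F := by
  by_cases h0 : ∀ i, F i ≠ 0
  · exact Complex.multipliable_of_summable_log (summable_log hF)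
  · push_neg at h0
    obtain ⟨i₀, hi₀⟩ := h0
    refine ⟨0, ?_⟩
    have h : ∀ᶠ S : Finset ℕ in atTop, ∏ i ∈ S, F i = 0 := by
      filter_upwards [eventually_ge_atTop ({i₀} : Finset ℕ)] with S hS
      exact Finset.prod_eq_zero (by simpa using hS) hi₀
    exact Tendsto.congr' (h.mono fun S hSS => hSS.symm) tendsto_const_nhds

lemma tendsto_prod {F : ℕ → ℂ} (hF : Summable fun i => ‖F i - 1‖) :
    Tendsto (fun N => ∏ i ∈ range N, F i) atTop (𝓝 (∏' i, F i)) :=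
  (multipliable_of_summable hF).hasProd.tendsto_prod_nat

lemma tprod_ne_zero {F : ℕ → ℂ} (hF : Summable fun i => ‖F i - 1‖) (h0 : ∀ i, F i ≠ 0) :
    ∏' i, F i ≠ 0 := by
  have h := Complex.cexp_tsum_eq_tprod h0 (summable_log hF)
  have h2 := h
  rw [← h2]
  exact Complex.exp_ne_zero _


noncomputable def gb (q : ℂ) : ℕ → ℕ → ℂ
  | 0, 0 => 1
  | 0, _ + 1 => 0
  | _ + 1, 0 => 1
  | m + 1, k + 1 => gb q m (k + 1) + q ^ (m - k) * gb q m k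

@[simp] lemma gb_zero (q : ℂ) (m : ℕ) : gb q m 0 = 1 := by cases m <;> rfl

lemma gb_of_lt (q : ℂ) : ∀ {m k : ℕ}, m < k → gb q m k = 0 := by
  intro m
  induction m with
  | zero => intro k hk; obtain ⟨k, rfl⟩ := Nat.exists_eq_add_of_lt hk; rfl
  | succ m ih =>
    intro k hk
    obtain ⟨j, rfl⟩ : ∃ j, k = j + 1 := ⟨k - 1, by omega⟩
    show gb q m (j + 1) + q ^ (m - j) * gb q m j = 0
    rw [ih (by omega), ih (by omega), mul_zero, add_zero]

noncomputable def Phi (q : ℂ) (M : ℕ) : ℂ := ∏ i ∈ range M, (1 - q ^ (i + 1))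

lemma Phi_succ (q : ℂ) (M : ℕ) : Phi q (M + 1) = Phi q M * (1 - q ^ (M + 1)) :=
  Finset.prod_range_succ _ _

@[simp] lemma Phi_zero (q : ℂ) : Phi q 0 = 1 := rfl

lemma one_sub_pow_ne_zero {q : ℂ} (hq : ‖q‖ < 1) (i : ℕ) : 1 - q ^ (i + 1) ≠ 0 := by
  have : ‖q ^ (i + 1)‖ < 1 := by
    rw [norm_pow]
    exact pow_lt_one₀ (norm_nonneg q) hq (by omega)
  intro h
  rw [sub_eq_zero] at h
  rw [← h] at this
  simp at this

lemma Phi_ne_zero {q : ℂ} (hq : ‖q‖ < 1) (M : ℕ) : Phi q M ≠ 0 :=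
  Finset.prod_ne_zero_iff.mpr fun i _ => one_sub_pow_ne_zero hq i

lemma gb_eq {q : ℂ} (hq : ‖q‖ < 1) : ∀ m k : ℕ, k ≤ m →
    gb q m k = Phi q m / (Phi q k * Phi q (m - k)) := by
  intro m
  induction m with
  | zero => intro k hk; interval_cases k; simp [gb]
  | succ m ih =>
    intro k hk
    match k with
    | 0 =>
      simp only [gb_zero, Nat.sub_zero, Phi_zero, one_mul]
      rw [div_self (Phi_ne_zero hq _)]
    | k + 1 =>
      show gb q m (k + 1) + q ^ (m - k) * gb q m k = _
      rcases Nat.lt_or_ge m (k + 1) with hlt | hge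
      · -- k = m
        have hkm : k = m := by omega
        subst hkm
        rw [gb_of_lt q hlt, Nat.sub_self, pow_zero, one_mul, zero_add, ih k le_rfl,
          Nat.sub_self, Nat.succ_sub_succ, Nat.sub_self, Phi_zero, mul_one, mul_one,
          Phi_succ]
        rw [div_eq_div_iff (Phi_ne_zero hq _) (mul_ne_zero (Phi_ne_zero hq _) (one_sub_pow_ne_zero hq _))]
        ring
      · -- k + 1 ≤ m
        rw [ih (k + 1) hge, ih k (by omega), Nat.succ_sub_succ]
        have e1 : m - k = (m - (k + 1)) + 1 := by omega
        rw [e1, Phi_succ q m, Phi_succ q (m - (k + 1)), Phi_succ q k]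
        have hpow : q ^ (m - (k + 1) + 1) * q ^ (k + 1) = q ^ (m + 1) := by
          rw [← pow_add]; congr 1; omega
        have h1 := Phi_ne_zero hq k
        have h2 := Phi_ne_zero hq (m - (k + 1))
        have h3 := one_sub_pow_ne_zero hq k
        have h4 := one_sub_pow_ne_zero hq (m - (k + 1))
        have h5 := Phi_ne_zero hq m
        set t := q ^ (m - (k + 1) + 1) with ht
        set v := q ^ (k + 1) with hv
        set w := q ^ (m + 1) with hw
        set Pk := Phi q k
        set Pa := Phi q (m - (k + 1))
        set Pm := Phi q m
        field_simp
        rw [← hpow]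
        ring

lemma qbinom (s x : ℂ) : ∀ m : ℕ, ∏ j ∈ range m, (1 + s ^ (2 * j) * x)
    = ∑ k ∈ range (m + 1), s ^ (k * (k - 1)) * gb (s ^ 2) m k * x ^ k := by
  intro m
  induction m with
  | zero => simp [gb]
  | succ m ih =>
    rw [prod_range_succ, ih]
    set c := s ^ (2 * m) * x with hc
    set A : ℕ → ℂ := fun k => s ^ (k * (k - 1)) * gb (s ^ 2) m k * x ^ k with hA
    rw [Finset.sum_range_succ' (fun k => s ^ (k * (k - 1)) * gb (s ^ 2) (m + 1) k * x ^ k) (m + 1)]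
    have hB0 : s ^ (0 * (0 - 1)) * gb (s ^ 2) (m + 1) 0 * x ^ 0 = 1 := by simp
    rw [hB0]
    have hBsplit : ∀ k ∈ range (m + 1),
        s ^ ((k + 1) * ((k + 1) - 1)) * gb (s ^ 2) (m + 1) (k + 1) * x ^ (k + 1)
          = A (k + 1) + A k * c := by
      intro k hk
      simp only [mem_range] at hk
      have hgb : gb (s ^ 2) (m + 1) (k + 1)
          = gb (s ^ 2) m (k + 1) + (s ^ 2) ^ (m - k) * gb (s ^ 2) m k := rfl
      have h6 : (k + 1) * k = k * (k - 1) + 2 * k := by cases k with | zero => rfl | succ n => simp [Nat.succ_sub_one]; ring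
      have hexp : s ^ ((k + 1) * ((k + 1) - 1)) * (s ^ 2) ^ (m - k)
          = s ^ (k * (k - 1)) * s ^ (2 * m) := by
        rw [← pow_mul, ← pow_add, ← pow_add]
        congr 1
        simp only [Nat.add_sub_cancel]
        rw [h6]
        generalize k * (k - 1) = a
        omega
      rw [hgb]
      simp only [hA, hc, Nat.add_sub_cancel]
      simp only [Nat.add_sub_cancel] at hexp
      linear_combination (x ^ (k + 1) * gb (s ^ 2) m k) * hexp
    rw [Finset.sum_congr rfl hBsplit, Finset.sum_add_distrib, ← Finset.sum_mul]
    have h1 : ∑ k ∈ range (m + 1), A (k + 1) + A 0 = ∑ k ∈ range (m + 2), A k :=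
      (Finset.sum_range_succ' A (m + 1)).symm
    have h2 : ∑ k ∈ range (m + 2), A k = ∑ k ∈ range (m + 1), A k + A (m + 1) :=
      Finset.sum_range_succ A (m + 1)
    have h3 : A (m + 1) = 0 := by
      simp only [hA, gb_of_lt (s ^ 2) (Nat.lt_succ_self m), mul_zero, zero_mul]
    have h4 : A 0 = 1 := by simp [hA]
    rw [h3, add_zero] at h2
    rw [h4] at h1
    linear_combination -h1 - h2
lemma sum_odd (N : ℕ) : ∑ j ∈ range N, (2 * j + 1) = N ^ 2 := by
  induction N with
  | zero => rfl
  | succ n ih => rw [Finset.sum_range_succ, ih]; ring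

lemma cast_mul_sub_one (k : ℕ) : ((k * (k - 1) : ℕ) : ℤ) = (k : ℤ) * ((k : ℤ) - 1) := by
  rcases k with _ | k
  · simp
  · push_cast [Nat.succ_sub_one]
    ring

lemma finite_jtp {s z : ℂ} (hs : s ≠ 0) (hz : z ≠ 0) (N : ℕ) :
    ∏ i ∈ range N, ((1 + s ^ (2 * i + 1) * z) * (1 + s ^ (2 * i + 1) / z))
      = ∑ k ∈ range (2 * N + 1),
          gb (s ^ 2) (2 * N) k * s ^ (((k : ℤ) - N) ^ 2) * z ^ ((k : ℤ) - N) := by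
  have hsp : ∀ a : ℤ, s ^ a ≠ 0 := fun a => zpow_ne_zero a hs
  have key := qbinom s (s ^ ((1 : ℤ) - 2 * N) * z) (2 * N)
  -- Left side of `key`
  have L1 : ∏ j ∈ range (2 * N), (1 + s ^ (2 * j) * (s ^ ((1 : ℤ) - 2 * N) * z))
      = s ^ (-(N : ℤ) ^ 2) * z ^ N *
        ∏ i ∈ range N, ((1 + s ^ (2 * i + 1) * z) * (1 + s ^ (2 * i + 1) / z)) := by
    have e0 : ∀ j : ℕ, (1 + s ^ (2 * j) * (s ^ ((1 : ℤ) - 2 * N) * z))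
        = 1 + s ^ (2 * (j : ℤ) + 1 - 2 * N) * z := by
      intro j
      rw [← zpow_natCast s (2 * j), ← mul_assoc, ← zpow_add₀ hs]
      have : ((2 * j : ℕ) : ℤ) + ((1 : ℤ) - 2 * N) = 2 * (j : ℤ) + 1 - 2 * N := by
        push_cast; ring
      rw [this]
    calc ∏ j ∈ range (2 * N), (1 + s ^ (2 * j) * (s ^ ((1 : ℤ) - 2 * N) * z))
        = ∏ j ∈ range (2 * N), (1 + s ^ (2 * (j : ℤ) + 1 - 2 * N) * z) := by
          exact Finset.prod_congr rfl fun j _ => e0 j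
      _ = (∏ j ∈ range N, (1 + s ^ (2 * (j : ℤ) + 1 - 2 * N) * z)) *
          ∏ j ∈ range N, (1 + s ^ (2 * ((N + j : ℕ) : ℤ) + 1 - 2 * N) * z) := by
          rw [two_mul, Finset.prod_range_add]
      _ = (∏ j ∈ range N, (s ^ (-(2 * (j : ℤ) + 1)) * z * (1 + s ^ (2 * j + 1) / z))) *
          ∏ j ∈ range N, (1 + s ^ (2 * j + 1) * z) := by
          congr 1
          · rw [← Finset.prod_range_reflect]
            refine Finset.prod_congr rfl fun j hj => ?_
            simp only [mem_range] at hj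
            have hc : ((N - 1 - j : ℕ) : ℤ) = (N : ℤ) - 1 - j := by omega
            rw [hc]
            have he : 2 * ((N : ℤ) - 1 - j) + 1 - 2 * N = -(2 * (j : ℤ) + 1) := by ring
            rw [he]
            have hinv : s ^ (-(2 * (j : ℤ) + 1)) = (s ^ (2 * j + 1) : ℂ)⁻¹ := by
              rw [← zpow_natCast s (2 * j + 1), ← zpow_neg]
              congr 1
            rw [hinv]
            have hsn : (s : ℂ) ^ (2 * j + 1) ≠ 0 := pow_ne_zero _ hs
            field_simp
            ring
          · refine Finset.prod_congr rfl fun j _ => ?_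
            have he : 2 * ((N + j : ℕ) : ℤ) + 1 - 2 * N = ((2 * j + 1 : ℕ) : ℤ) := by
              push_cast; ring
            rw [he, zpow_natCast]
      _ = s ^ (-(N : ℤ) ^ 2) * z ^ N *
          ∏ i ∈ range N, ((1 + s ^ (2 * i + 1) * z) * (1 + s ^ (2 * i + 1) / z)) := by
          rw [Finset.prod_mul_distrib, Finset.prod_mul_distrib, Finset.prod_mul_distrib,
            Finset.prod_const, Finset.card_range]
          have hp : ∏ j ∈ range N, s ^ (-(2 * (j : ℤ) + 1)) = s ^ (-(N : ℤ) ^ 2) := by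
            have : ∀ j : ℕ, s ^ (-(2 * (j : ℤ) + 1)) = (s⁻¹) ^ (2 * j + 1) := by
              intro j
              rw [inv_pow, ← zpow_natCast s (2 * j + 1), ← zpow_neg]
              congr 1
            rw [Finset.prod_congr rfl fun j _ => this j, Finset.prod_pow_eq_pow_sum, sum_odd,
              inv_pow, ← zpow_natCast s (N ^ 2), ← zpow_neg]
            congr 1
          rw [hp]
          ring
  -- Right side of `key`
  have L2 : ∑ k ∈ range (2 * N + 1),
        s ^ (k * (k - 1)) * gb (s ^ 2) (2 * N) k * (s ^ ((1 : ℤ) - 2 * N) * z) ^ k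
      = s ^ (-(N : ℤ) ^ 2) * z ^ N *
        ∑ k ∈ range (2 * N + 1),
          gb (s ^ 2) (2 * N) k * s ^ (((k : ℤ) - N) ^ 2) * z ^ ((k : ℤ) - N) := by
    rw [Finset.mul_sum]
    refine Finset.sum_congr rfl fun k _ => ?_
    rw [mul_pow, ← zpow_natCast (s ^ ((1 : ℤ) - 2 * N)) k, ← zpow_mul,
      ← zpow_natCast s (k * (k - 1)), ← zpow_natCast z k]
    have h2 : ((k * (k - 1) : ℕ) : ℤ) + ((1 : ℤ) - 2 * N) * k
        = (((k : ℤ) - N) ^ 2) + (-(N : ℤ) ^ 2) := by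
      rw [cast_mul_sub_one]
      ring
    have h3 : (z : ℂ) ^ (k : ℤ) = z ^ (N : ℤ) * z ^ ((k : ℤ) - N) := by
      rw [← zpow_add₀ hz]
      ring_nf
    calc s ^ ((k * (k - 1) : ℕ) : ℤ) * gb (s ^ 2) (2 * N) k * (s ^ (((1 : ℤ) - 2 * N) * k) * z ^ (k : ℤ))
        = gb (s ^ 2) (2 * N) k * (s ^ (((k * (k - 1) : ℕ) : ℤ) + ((1 : ℤ) - 2 * N) * k) * z ^ (k : ℤ)) := by
          rw [zpow_add₀ hs]
          ring
      _ = gb (s ^ 2) (2 * N) k * (s ^ ((((k : ℤ) - N) ^ 2) + (-(N : ℤ) ^ 2)) * (z ^ (N : ℤ) * z ^ ((k : ℤ) - N))) := by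
          rw [h2, ← h3]
      _ = s ^ (-(N : ℤ) ^ 2) * z ^ N *
          (gb (s ^ 2) (2 * N) k * s ^ (((k : ℤ) - N) ^ 2) * z ^ ((k : ℤ) - N)) := by
          rw [zpow_add₀ hs, ← zpow_natCast z N]
          ring
  rw [L1, L2] at key
  exact mul_left_cancel₀ (mul_ne_zero (hsp _) (pow_ne_zero _ hz)) key
section Analytic

variable {q : ℂ}

lemma summable_geo_norm (hq : ‖q‖ < 1) : Summable fun i : ℕ => ‖(1 - q ^ (i + 1)) - 1‖ := by
  have h : Summable fun i : ℕ => ‖q‖ ^ (i + 1) := by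
    simpa [pow_succ] using (summable_geometric_of_lt_one (norm_nonneg q)
      hq).mul_right ‖q‖
  refine h.congr fun i => ?_
  simp [norm_pow]

lemma tendsto_Phi (hq : ‖q‖ < 1) : Tendsto (Phi q) atTop (𝓝 (∏' i : ℕ, (1 - q ^ (i + 1)))) :=
  tendsto_prod (summable_geo_norm hq)

lemma Pinf_ne_zero (hq : ‖q‖ < 1) : (∏' i : ℕ, (1 - q ^ (i + 1))) ≠ 0 :=
  tprod_ne_zero (summable_geo_norm hq) fun i => one_sub_pow_ne_zero hq i

lemma gb_bound (hq : ‖q‖ < 1) : ∃ B : ℝ, 0 < B ∧ ∀ m k : ℕ, ‖gb q m k‖ ≤ B := by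
  obtain ⟨C, hC⟩ := ((tendsto_Phi hq).norm.bddAbove_range)
  obtain ⟨D, hD⟩ := (((tendsto_Phi hq).norm.inv₀
    (norm_ne_zero_iff.mpr (Pinf_ne_zero hq))).bddAbove_range)
  have hPpos : ∀ M, 0 < ‖Phi q M‖ := fun M => norm_pos_iff.mpr (Phi_ne_zero hq M)
  have hCb : ∀ M, ‖Phi q M‖ ≤ C := fun M => hC ⟨M, rfl⟩
  have hDb : ∀ M, ‖Phi q M‖⁻¹ ≤ D := fun M => hD ⟨M, rfl⟩
  have hD0 : 0 < D := lt_of_lt_of_le (inv_pos.mpr (hPpos 0)) (hDb 0)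
  have hC0 : 0 < C := lt_of_lt_of_le (hPpos 0) (hCb 0)
  refine ⟨C * D * D, mul_pos (mul_pos hC0 hD0) hD0, fun m k => ?_⟩
  rcases le_or_gt k m with hkm | hkm
  · rw [gb_eq hq m k hkm]
    rw [norm_div, norm_mul]
    rw [div_le_iff₀ (mul_pos (hPpos k) (hPpos (m - k)))]
    calc ‖Phi q m‖ ≤ C := hCb m
      _ ≤ C * D * D * (‖Phi q k‖ * ‖Phi q (m - k)‖) := by
          have h1 : (1:ℝ) ≤ D * ‖Phi q k‖ := by
            rw [← inv_mul_cancel₀ (ne_of_gt (hPpos k))]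
            exact mul_le_mul_of_nonneg_right (hDb k) (norm_nonneg _)
          have h2 : (1:ℝ) ≤ D * ‖Phi q (m - k)‖ := by
            rw [← inv_mul_cancel₀ (ne_of_gt (hPpos (m - k)))]
            exact mul_le_mul_of_nonneg_right (hDb (m - k)) (norm_nonneg _)
          have h3 : (1:ℝ) ≤ (D * ‖Phi q k‖) * (D * ‖Phi q (m - k)‖) := by nlinarith
          nlinarith [mul_le_mul_of_nonneg_left h3 hC0.le]
  · rw [gb_of_lt q hkm]
    simpa using by positivity
  
lemma gb_tendsto (hq : ‖q‖ < 1) (n : ℤ) :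
    Tendsto (fun N : ℕ => gb q (2 * N) ((N : ℤ) + n).toNat) atTop
      (𝓝 (∏' i : ℕ, (1 - q ^ (i + 1)))⁻¹) := by
  set P := ∏' i : ℕ, (1 - q ^ (i + 1)) with hP
  have h2N : Tendsto (fun N : ℕ => Phi q (2 * N)) atTop (𝓝 P) :=
    (tendsto_Phi hq).comp (tendsto_atTop_atTop_of_monotone
      (fun a b hab => by omega) (fun b => ⟨b, by omega⟩))
  have hplus : Tendsto (fun N : ℕ => Phi q ((N : ℤ) + n).toNat) atTop (𝓝 P) :=
    (tendsto_Phi hq).comp (tendsto_atTop_atTop_of_monotone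
      (fun a b hab => by omega) (fun b => ⟨b + n.natAbs, by omega⟩))
  have hminus : Tendsto (fun N : ℕ => Phi q ((N : ℤ) - n).toNat) atTop (𝓝 P) :=
    (tendsto_Phi hq).comp (tendsto_atTop_atTop_of_monotone
      (fun a b hab => by omega) (fun b => ⟨b + n.natAbs, by omega⟩))
  have hPne : P ≠ 0 := Pinf_ne_zero hq
  have hdiv : Tendsto (fun N : ℕ =>
      Phi q (2 * N) / (Phi q ((N : ℤ) + n).toNat * Phi q ((N : ℤ) - n).toNat)) atTop
      (𝓝 (P / (P * P))) :=
    h2N.div (hplus.mul hminus) (mul_ne_zero hPne hPne)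
  have heq : P / (P * P) = P⁻¹ := by
    field_simp
  rw [heq] at hdiv
  refine Tendsto.congr' ?_ hdiv
  filter_upwards [eventually_ge_atTop n.natAbs] with N hN
  have hk : ((N : ℤ) + n).toNat ≤ 2 * N := by omega
  rw [gb_eq hq (2 * N) _ hk]
  have h2 : 2 * N - ((N : ℤ) + n).toNat = ((N : ℤ) - n).toNat := by omega
  rw [h2]

end Analytic

lemma norm_zpow_le_max (z : ℂ) (n : ℤ) :
    ‖z ^ n‖ ≤ (max ‖z‖ ‖z⁻¹‖) ^ n.natAbs := by
  rcases le_or_gt 0 n with h | h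
  · obtain ⟨m, rfl⟩ := Int.eq_ofNat_of_zero_le h
    rw [zpow_natCast, norm_pow, Int.natAbs_natCast]
    exact pow_le_pow_left₀ (norm_nonneg z) (le_max_left _ _) m
  · obtain ⟨m, rfl⟩ : ∃ m : ℕ, n = -(m : ℤ) := ⟨n.natAbs, by omega⟩
    rw [zpow_neg, ← inv_zpow, zpow_natCast, norm_pow, Int.natAbs_neg, Int.natAbs_natCast]
    exact pow_le_pow_left₀ (norm_nonneg _) (le_max_right _ _) m

lemma summable_bound (B : ℝ) {r M : ℝ} (hr0 : 0 < r) (hr : r < 1) (hM : 0 < M) :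
    Summable (fun n : ℤ => B * (r ^ n.natAbs ^ 2 * M ^ n.natAbs)) := by
  apply Summable.mul_left
  have hnat : Summable (fun m : ℕ => r ^ m ^ 2 * M ^ m) := by
    have h0 : Tendsto (fun m : ℕ => r ^ (2 * m + 1) * M) atTop (𝓝 0) := by
      have : Tendsto (fun m : ℕ => r ^ (2 * m + 1)) atTop (𝓝 0) :=
        (tendsto_pow_atTop_nhds_zero_of_lt_one (le_of_lt hr0) hr).comp
          (tendsto_atTop_atTop_of_monotone (fun a b h => by omega) (fun b => ⟨b, by omega⟩))
      simpa using this.mul_const M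
    apply summable_of_ratio_norm_eventually_le (r := 1/2) (by norm_num)
    filter_upwards [h0.eventually_le_const (by norm_num : (0:ℝ) < 1/2)] with m hm
    have hkey : r ^ ((m + 1) ^ 2) * M ^ (m + 1)
        = (r ^ m ^ 2 * M ^ m) * (r ^ (2 * m + 1) * M) := by
      have he : (m + 1) ^ 2 = m ^ 2 + (2 * m + 1) := by ring
      rw [he, pow_add, pow_succ]
      ring
    rw [Real.norm_of_nonneg (by positivity), Real.norm_of_nonneg (by positivity), hkey]
    have hA : (0:ℝ) ≤ r ^ m ^ 2 * M ^ m := by positivity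
    nlinarith
  exact Summable.of_nat_of_neg (by simpa using hnat) (by simpa using hnat)
lemma triple_summable {s z : ℂ} (hs : ‖s‖ < 1) (hz : z ≠ 0) :
    Summable fun i : ℕ =>
      ‖(1 + s ^ (2 * i + 1) * z) * (1 + s ^ (2 * i + 1) / z) - 1‖ := by
  have hgeo : Summable fun i : ℕ => (‖s‖ ^ 2) ^ i * (‖s‖ * (‖z‖ + ‖z‖⁻¹) + 1) :=
    (summable_geometric_of_lt_one (by positivity)
      (by nlinarith [norm_nonneg s])).mul_right _
  refine Summable.of_nonneg_of_le (fun i => norm_nonneg _) (fun i => ?_) hgeo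
  have hexp : (1 + s ^ (2 * i + 1) * z) * (1 + s ^ (2 * i + 1) / z) - 1
      = s ^ (2 * i + 1) * (z + 1 / z) + s ^ (2 * i + 1) * s ^ (2 * i + 1) := by
    field_simp
    ring
  rw [hexp]
  set u := ‖s‖ with hu
  have hu0 : 0 ≤ u := norm_nonneg s
  have h1 : ‖s ^ (2 * i + 1) * (z + 1 / z)‖ ≤ (u ^ 2) ^ i * (u * (‖z‖ + ‖z‖⁻¹)) := by
    rw [norm_mul, norm_pow]
    have e : u ^ (2 * i + 1) = (u ^ 2) ^ i * u := by
      rw [← pow_mul, ← pow_succ]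
    rw [e, mul_assoc]
    refine mul_le_mul_of_nonneg_left ?_ (by positivity)
    refine mul_le_mul_of_nonneg_left ?_ hu0
    calc ‖z + 1 / z‖ ≤ ‖z‖ + ‖1 / z‖ := norm_add_le _ _
      _ = ‖z‖ + ‖z‖⁻¹ := by rw [one_div, norm_inv]
  have h2 : ‖s ^ (2 * i + 1) * s ^ (2 * i + 1)‖ ≤ (u ^ 2) ^ i * 1 := by
    rw [norm_mul, norm_pow, ← hu, ← pow_add, mul_one, ← pow_mul]
    exact pow_le_pow_of_le_one hu0 hs.le (by omega)
  calc ‖_ + _‖ ≤ _ := norm_add_le _ _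
    _ ≤ (u ^ 2) ^ i * (u * (‖z‖ + ‖z‖⁻¹)) + (u ^ 2) ^ i * 1 := add_le_add h1 h2
    _ = (u ^ 2) ^ i * (u * (‖z‖ + ‖z‖⁻¹) + 1) := by ring
end JTP

open JTP

/-!
Statement 8: the Jacobi triple product identity
`Σ_{n∈ℤ} q^{n²/2} z^n = (q;q)_∞ ∏_{i ∈ ℕ+1/2} (1 + q^i z)(1 + q^i/z)`.

To deal with the half-integer powers of `q`, we write `q = s²` for a square root `s`
(so `|q| < 1 ↔ ‖s‖ < 1`), and then `q^{n²/2} = s^{n²}` and `q^{k+1/2} = s^{2k+1}`.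
-/

theorem jacobi_triple_product (s z : ℂ) (hs : ‖s‖ < 1) (hz : z ≠ 0) :
    ∑' n : ℤ, s ^ (n ^ 2) * z ^ n
      = (∏' k : ℕ, (1 - (s ^ 2) ^ (k + 1))) *
        ∏' i : ℕ, ((1 + s ^ (2 * i + 1) * z) * (1 + s ^ (2 * i + 1) / z)) := by
  by_cases hs0 : s = 0
  · subst hs0
    have hL : (∑' n : ℤ, (0 : ℂ) ^ (n ^ 2) * z ^ n) = 1 := by
      rw [tsum_eq_single (0 : ℤ) (fun n hn => by
        rw [zero_zpow _ (pow_ne_zero 2 hn), zero_mul])]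
      norm_num
    have h1 : ∀ k : ℕ, (1 : ℂ) - ((0 : ℂ) ^ 2) ^ (k + 1) = 1 := by intro k; norm_num
    have h2 : ∀ i : ℕ, ((1 + (0 : ℂ) ^ (2 * i + 1) * z) * (1 + (0 : ℂ) ^ (2 * i + 1) / z))
        = 1 := by intro i; rw [zero_pow (by omega : 2 * i + 1 ≠ 0)]; ring
    rw [hL, tprod_congr h1, tprod_congr h2, tprod_one]
    norm_num
  · have hq : ‖s ^ 2‖ < 1 := by
      rw [norm_pow]
      nlinarith [norm_nonneg s]
    have hsnorm : (0 : ℝ) < ‖s‖ := norm_pos_iff.mpr hs0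
    set q := s ^ 2 with hqdef
    set P := ∏' i : ℕ, (1 - q ^ (i + 1)) with hPdef
    have hPne : P ≠ 0 := Pinf_ne_zero hq
    obtain ⟨B, hB0, hB⟩ := gb_bound hq
    set M := max ‖z‖ ‖z⁻¹‖ with hMdef
    have hM0 : 0 < M := lt_max_of_lt_left (norm_pos_iff.mpr hz)
    set f : ℕ → ℤ → ℂ := fun N n =>
      if n.natAbs ≤ N then gb q (2 * N) ((N : ℤ) + n).toNat * s ^ (n ^ 2) * z ^ n else 0
      with hfdef
    -- the uniform bound
    have hbound : ∀ N n, ‖f N n‖ ≤ B * (‖s‖ ^ n.natAbs ^ 2 * M ^ n.natAbs) := by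
      intro N n
      by_cases h : n.natAbs ≤ N
      · simp only [hfdef, if_pos h]
        have h2 : ‖s ^ (n ^ 2)‖ = ‖s‖ ^ n.natAbs ^ 2 := by
          rw [norm_zpow, show (n ^ 2 : ℤ) = ((n.natAbs ^ 2 : ℕ) : ℤ) from
            (by push_cast [sq_abs]; ring), zpow_natCast]
        rw [norm_mul, norm_mul, h2]
        have hbb : B * (‖s‖ ^ n.natAbs ^ 2 * M ^ n.natAbs)
            = B * ‖s‖ ^ n.natAbs ^ 2 * M ^ n.natAbs := by ring
        rw [hbb]
        have hg := hB (2 * N) ((N : ℤ) + n).toNat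
        have hzz := norm_zpow_le_max z n
        gcongr
      · simp only [hfdef, if_neg h, norm_zero]
        positivity
    -- pointwise limits
    have hpt : ∀ n : ℤ, Tendsto (fun N => f N n) atTop (𝓝 (P⁻¹ * (s ^ (n ^ 2) * z ^ n))) := by
      intro n
      have ht := (gb_tendsto hq n).mul_const (s ^ (n ^ 2) * z ^ n)
      refine Tendsto.congr' ?_ ht
      filter_upwards [eventually_ge_atTop n.natAbs] with N hN
      simp only [hfdef, if_pos hN, mul_assoc]
    -- dominated convergence
    have hsum := tendsto_tsum_of_dominated_convergence
      (summable_bound B hsnorm hs hM0) hpt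
      (Eventually.of_forall fun N n => hbound N n)
    -- identify the finite sums
    have hfin : ∀ N : ℕ, (∑' n : ℤ, f N n)
        = ∏ i ∈ range N, ((1 + s ^ (2 * i + 1) * z) * (1 + s ^ (2 * i + 1) / z)) := by
      intro N
      have hsupp : ∀ n : ℤ, n ∉ Finset.Icc (-(N : ℤ)) N → f N n = 0 := by
        intro n hn
        simp only [Finset.mem_Icc] at hn
        simp only [hfdef]
        rw [if_neg (by omega)]
      rw [tsum_eq_sum hsupp, finite_jtp hs0 hz N, ← hqdef]
      refine Finset.sum_nbij' (i := fun n => ((n : ℤ) + N).toNat)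
        (j := fun k => (k : ℤ) - N) ?_ ?_ ?_ ?_ ?_
      · intro n hn
        simp only [Finset.mem_Icc] at hn
        simp only [Finset.mem_range]
        omega
      · intro k hk
        simp only [Finset.mem_range] at hk
        simp only [Finset.mem_Icc]
        omega
      · intro n hn
        simp only [Finset.mem_Icc] at hn
        show ((n + (N : ℤ)).toNat : ℤ) - N = n
        omega
      · intro k hk
        simp only [Finset.mem_range] at hk
        show ((k : ℤ) - N + N).toNat = k
        omega
      · intro n hn
        simp only [Finset.mem_Icc] at hn
        simp only [hfdef]
        rw [if_pos (by omega)]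
        have e1 : ((((n : ℤ) + N).toNat : ℤ)) - N = n := by omega
        rw [e1]
        have e2 : ((N : ℤ) + n).toNat = ((n : ℤ) + N).toNat := by omega
        rw [e2]
    -- limit of the products
    have hprod : Tendsto
        (fun N => ∏ i ∈ range N, ((1 + s ^ (2 * i + 1) * z) * (1 + s ^ (2 * i + 1) / z)))
        atTop (𝓝 (∏' i : ℕ, ((1 + s ^ (2 * i + 1) * z) * (1 + s ^ (2 * i + 1) / z)))) :=
      tendsto_prod (triple_summable hs hz)
    have hkey : (∑' n : ℤ, P⁻¹ * (s ^ (n ^ 2) * z ^ n))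
        = ∏' i : ℕ, ((1 + s ^ (2 * i + 1) * z) * (1 + s ^ (2 * i + 1) / z)) := by
      refine tendsto_nhds_unique ?_ hprod
      refine hsum.congr fun N => ?_
      exact hfin N
    rw [tsum_mul_left] at hkey
    rw [← hkey]
    rw [← mul_assoc, mul_inv_cancel₀ hPne, one_mul]
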